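/- Every regular simple graph on more than 2 vertices is uniquely determined (up to isomorphism) by any one of its vertex-deleted subgraphs: if G and H are regular graphs on n > 2 vertices and G−u is isomorphic to H−w for some vertices u of G and w of H, and G and H have the same degree of regularity deducible from these cards, then G ≅ H. Equivalently, from a card G' of a regular graph, the original graph is reconstructed by adding a vertex adjacent to all vertices of minimum degree in G' (or an isolated vertex if G' is empty). -/

import Mathlib

open SimpleGraph
open scoped Classical

private lemma iso_degree {V W : Type*} [Fintype V] [Fintype W]
    {G : SimpleGraph V} {H : SimpleGraph W} (f : G ≃g H) (v : V)
    [Fintype (G.neighborSet v)] [Fintype (H.neighborSet (f v))] :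
    H.degree (f v) = G.degree v := by
  rw [← card_neighborSet_eq_degree, ← card_neighborSet_eq_degree]
  exact Fintype.card_congr (f.mapNeighborSet v).symm

private lemma card_degree {V : Type*} [Fintype V]
    (G : SimpleGraph V) (k : ℕ) (hG : G.IsRegularOfDegree k) (u : V)
    (v : ({u}ᶜ : Set V)) :
    (G.induce ({u}ᶜ : Set V)).degree v = if G.Adj u (v : V) then k - 1 else k := by
  classical
  have hv : (v : V) ≠ u := v.2
  have h1 : (G.induce ({u}ᶜ : Set V)).degree v =
      Fintype.card {x : V // x ≠ u ∧ G.Adj (v : V) x} := by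
    rw [← card_neighborSet_eq_degree]
    apply Fintype.card_congr
    refine ⟨fun x => ⟨(x : V), x.1.2, x.2⟩, fun x => ⟨⟨x.1, x.2.1⟩, x.2.2⟩, ?_, ?_⟩ <;>
      intro x <;> rfl
  have h2 : Fintype.card {x : V // x ≠ u ∧ G.Adj (v : V) x} =
      ((G.neighborFinset (v : V)).erase u).card := by
    rw [Fintype.card_subtype]
    congr 1
    ext x
    simp [Finset.mem_erase, and_comm]
  rw [h1, h2]
  by_cases h : G.Adj u (v : V)
  · rw [if_pos h, Finset.card_erase_of_mem (by simpa using h.symm), card_neighborFinset_eq_degree,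
      hG (v : V)]
  · rw [if_neg h, Finset.erase_eq_of_notMem (by simpa using fun h' => h (G.adj_symm h')),
      card_neighborFinset_eq_degree, hG (v : V)]

private lemma adj_iff_degree_lt {V : Type*} [Fintype V]
    (G : SimpleGraph V) (k : ℕ) (hG : G.IsRegularOfDegree k) (u : V)
    (v : ({u}ᶜ : Set V)) :
    G.Adj u (v : V) ↔ (G.induce ({u}ᶜ : Set V)).degree v < k := by
  rw [card_degree G k hG u v]
  constructor
  · intro h
    have hk : 1 ≤ k := by
      rw [← hG u, ← card_neighborFinset_eq_degree]
      exact Finset.card_pos.mpr ⟨(v : V), by simpa using h⟩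
    rw [if_pos h]
    omega
  · intro h
    by_contra hadj
    rw [if_neg hadj] at h
    omega

/-- A regular graph on more than two vertices is determined, among regular graphs of the
same degree, by any one vertex-deleted subgraph. -/
theorem stmt2 {V W : Type*} [Fintype V] [Fintype W]
    (G : SimpleGraph V) (H : SimpleGraph W) (k : ℕ)
    (hG : G.IsRegularOfDegree k) (hH : H.IsRegularOfDegree k)
    (hn : 2 < Fintype.card V) (hcard : Fintype.card V = Fintype.card W)
    (u : V) (w : W)
    (hiso : Nonempty ((G.induce ({u}ᶜ : Set V)) ≃g (H.induce ({w}ᶜ : Set W)))) :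
    Nonempty (G ≃g H) := by
  classical
  obtain ⟨φ⟩ := hiso
  -- key: adjacency to the deleted vertex is preserved
  have key : ∀ v : ({u}ᶜ : Set V), G.Adj u (v : V) ↔ H.Adj w ((φ v : W)) := by
    intro v
    rw [adj_iff_degree_lt G k hG u v, adj_iff_degree_lt H k hH w (φ v)]
    have := iso_degree φ v
    omega
  -- build the equivalence
  let e : V ≃ W :=
    { toFun := fun v => if h : v = u then w else (φ ⟨v, h⟩ : W)
      invFun := fun x => if h : x = w then u else (φ.symm ⟨x, h⟩ : V)
      left_inv := by
        intro v
        by_cases h : v = u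
        · simp [h]
        · have hne : (φ ⟨v, h⟩ : W) ≠ w := (φ ⟨v, h⟩).2
          simp only [dif_neg h, dif_neg hne]
          have : φ.symm ⟨(φ ⟨v, h⟩ : W), hne⟩ = ⟨v, h⟩ := by
            exact φ.symm_apply_apply _
          rw [this]
      right_inv := by
        intro x
        by_cases h : x = w
        · simp [h]
        · have hne : (φ.symm ⟨x, h⟩ : V) ≠ u := (φ.symm ⟨x, h⟩).2
          simp only [dif_neg h, dif_neg hne]
          have : φ ⟨(φ.symm ⟨x, h⟩ : V), hne⟩ = ⟨x, h⟩ := by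
            exact φ.apply_symm_apply _
          rw [this] }
  refine ⟨⟨e, ?_⟩⟩
  intro a b
  by_cases ha : a = u <;> by_cases hb : b = u
  · subst ha; subst hb; simp [e]
  · have h1 : e a = w := by simp [e, ha]
    have hb' : e b = (φ ⟨b, hb⟩ : W) := by simp [e, hb]
    rw [h1, hb', ha]
    exact (key ⟨b, hb⟩).symm
  · have h1 : e b = w := by simp [e, hb]
    have ha' : e a = (φ ⟨a, ha⟩ : W) := by simp [e, ha]
    rw [h1, ha', hb, H.adj_comm, G.adj_comm]
    exact (key ⟨a, ha⟩).symm
  · have ha' : e a = (φ ⟨a, ha⟩ : W) := by simp [e, ha]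
    have hb' : e b = (φ ⟨b, hb⟩ : W) := by simp [e, hb]
    rw [ha', hb']
    exact φ.map_adj_iff (v := ⟨a, ha⟩) (w := ⟨b, hb⟩)
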